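/- If for every graph G with χ(G) > n the exponential graph K_n^G satisfies χ(K_n^G) ≤ n, then for all graphs G and H with χ(G) > n and χ(H) > n, χ(G × H) > n; conversely, if there is a graph G with χ(G) > n and χ(K_n^G) > n, then χ(G × K_n^G) ≤ n, giving a counterexample. -/

import Mathlib

open SimpleGraph

universe u v w

/-- The categorical (tensor) product of two simple graphs. -/
def tensorGraph {α : Type u} {β : Type v} (G : SimpleGraph α) (H : SimpleGraph β) :
    SimpleGraph (α × β) where
  Adj p q := G.Adj p.1 q.1 ∧ H.Adj p.2 q.2
  symm := ⟨fun p q h => ⟨h.1.symm, h.2.symm⟩⟩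
  loopless := ⟨fun p h => G.loopless.irrefl p.1 h.1⟩


/-- Adjacency of the exponential graph `K^G` (loops allowed). -/
def expAdj {α : Type u} {γ : Type w} (K : SimpleGraph γ) (G : SimpleGraph α)
    (f g : α → γ) : Prop :=
  ∀ ⦃x y : α⦄, G.Adj x y → K.Adj (f x) (g y)

/-- The exponential graph `K^G` as a simple graph (loops removed). -/
def expGraph {α : Type u} {γ : Type w} (K : SimpleGraph γ) (G : SimpleGraph α) :
    SimpleGraph (α → γ) where
  Adj f g := f ≠ g ∧ expAdj K G f g
  symm := ⟨fun f g h => ⟨h.1.symm, fun x y hxy => (h.2 hxy.symm).symm⟩⟩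
  loopless := ⟨fun f h => h.1 rfl⟩
theorem hedetniemi_iff_exp_version (n : ℕ) :
    ((∀ {α : Type u} (G : SimpleGraph α), ¬ G.Colorable n →
        (expGraph (⊤ : SimpleGraph (Fin n)) G).Colorable n) →
      ∀ {α β : Type u} (G : SimpleGraph α) (H : SimpleGraph β),
        ¬ G.Colorable n → ¬ H.Colorable n → ¬ (tensorGraph G H).Colorable n) ∧
    (∀ {α : Type u} (G : SimpleGraph α), ¬ G.Colorable n →
        ¬ (expGraph (⊤ : SimpleGraph (Fin n)) G).Colorable n →
        (tensorGraph G (expGraph (⊤ : SimpleGraph (Fin n)) G)).Colorable n) := by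
  constructor
  · intro hyp α β G H hG hH hcol
    obtain ⟨c⟩ := hcol
    set φ : β → (α → Fin n) := fun b a => c (a, b) with hφ
    have hhom : ∀ {b b' : β}, H.Adj b b' →
        (expGraph (⊤ : SimpleGraph (Fin n)) G).Adj (φ b) (φ b') := by
      intro b b' hb
      refine ⟨?_, ?_⟩
      · intro heq
        apply hG
        refine ⟨⟨fun a => c (a, b), ?_⟩⟩
        intro x y hxy
        have h1 : c (x, b) ≠ c (y, b') := c.valid ⟨hxy, hb⟩
        have h2 : c (y, b) = c (y, b') := congrFun heq y
        simpa [h2] using h1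
      · intro x y hxy
        exact c.valid ⟨hxy, hb⟩
    have hexp := hyp G hG
    obtain ⟨col⟩ := hexp
    apply hH
    exact ⟨col.comp ⟨φ, fun hb => hhom hb⟩⟩
  · intro α G hG hE
    refine ⟨⟨fun p => p.2 p.1, ?_⟩⟩
    rintro ⟨x, f⟩ ⟨y, g⟩ ⟨hxy, hne, hadj⟩
    exact hadj hxy
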